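/- arXiv:1506.01483 — 2 statements merged into one kernel-verified Lean document; each statement's English description precedes it below -/
import Mathlib

section
/- Let I be the edge ideal of Γ and t ≥ 2, and suppose x^a ∈ (I^t : m) \ I^t. Then the support V(a) = {i : a_i ≠ 0} is a dominating set of Γ (i.e., every vertex of Γ lies in V(a) or is adjacent to a vertex of V(a)), and the weighted graph Γ_a has no isolated vertices (every vertex of V(a) lies in an edge of Γ with both endpoints in V(a)). -/
open MvPolynomial

section Defs

variable {V : Type*}

/-- A matching of the vertex-weighted graph `Γ_a`: a multiset of (oriented) edges of `G`
in which every vertex `i` appears at most `a i` times. -/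
def IsWMatching [DecidableEq V] (G : SimpleGraph V) (a : V → ℕ)
    (M : Multiset (V × V)) : Prop :=
  (∀ e ∈ M, G.Adj e.1 e.2) ∧
    ∀ i : V, (M.map Prod.fst).count i + (M.map Prod.snd).count i ≤ a i

/-- The matching number `ν(Γ_a)` of the vertex-weighted graph `Γ_a`. -/
noncomputable def wNu [DecidableEq V] (G : SimpleGraph V) (a : V → ℕ) : ℕ :=
  sSup {k : ℕ | ∃ M : Multiset (V × V), IsWMatching G a M ∧ Multiset.card M = k}

/-- A perfect matching of `Γ_a`: every vertex `i` appears exactly `a i` times. -/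
def IsWPerfectMatching [DecidableEq V] (G : SimpleGraph V) (a : V → ℕ)
    (M : Multiset (V × V)) : Prop :=
  (∀ e ∈ M, G.Adj e.1 e.2) ∧
    ∀ i : V, (M.map Prod.fst).count i + (M.map Prod.snd).count i = a i

/-- `Γ_a` is matching-critical: lowering the weight of any supported vertex
does not decrease the matching number. -/
def MatchingCritical [DecidableEq V] (G : SimpleGraph V) (a : V → ℕ) : Prop :=
  ∀ i : V, a i ≠ 0 → wNu G (a - Pi.single i 1) = wNu G a

/-- The polarization `p(Γ_a)`: each vertex `i` is replaced by `a i` copies. -/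
def polarization (G : SimpleGraph V) (a : V → ℕ) :
    SimpleGraph (Σ i : V, Fin (a i)) where
  Adj u v := G.Adj u.1 v.1
  symm := ⟨fun _ _ h => G.adj_symm h⟩
  loopless := ⟨fun u h => G.irrefl (v := u.1) h⟩

/-- The base graph of `Γ_a` as a spanning subgraph of `G`: edges of `G` between
supported vertices (vertices of weight `0` become isolated). -/
def baseGraph (G : SimpleGraph V) (a : V → ℕ) : SimpleGraph V where
  Adj i j := G.Adj i j ∧ a i ≠ 0 ∧ a j ≠ 0
  symm := ⟨fun _ _ h => ⟨h.1.symm, h.2.2, h.2.1⟩⟩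
  loopless := ⟨fun _ h => G.irrefl h.1⟩

/-- An ear: a walk with endpoints `u`, `v` and list of inner vertices `inner`. -/
structure PreEar (V : Type*) where
  u : V
  inner : List V
  v : V

namespace PreEar

/-- The length of an ear. -/
def len (E : PreEar V) : ℕ := E.inner.length + 1

/-- The vertex list of an ear. -/
def verts (E : PreEar V) : List V := E.u :: (E.inner ++ [E.v])

/-- The ear is a walk in `G`. -/
def IsWalk (G : SimpleGraph V) (E : PreEar V) : Prop := List.Chain' G.Adj E.verts

end PreEar

/-- Endpoints of each subsequent ear belong to earlier ears
(`S` accumulates the vertices seen so far). -/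
def earsOk (G : SimpleGraph V) : List (PreEar V) → List V → Prop
  | [], _ => True
  | E :: rest, S => E.u ∈ S ∧ E.v ∈ S ∧ earsOk G rest (S ++ E.verts)

/-- The number of appearances of `i` in an ear decomposition, not as an endpoint of
the subsequent ears. -/
def earCount [DecidableEq V] (i : V) : List (PreEar V) → ℕ
  | [] => 0
  | E0 :: rest => (E0.u :: E0.inner).count i + (rest.map fun E => E.inner.count i).sum

/-- The number of even ears of an ear decomposition. -/
def evenEars (D : List (PreEar V)) : ℕ :=
  D.countP fun E => E.inner.length % 2 == 1

/-- An ear decomposition starting with an odd closed walk. -/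
def IsInitOddDecomp (G : SimpleGraph V) (D : List (PreEar V)) : Prop :=
  ∃ E0 rest, D = E0 :: rest ∧ E0.u = E0.v ∧ Odd E0.len ∧
    (∀ E ∈ D, E.IsWalk G) ∧ earsOk G rest E0.verts

/-- A family of initially odd ear decompositions of the connected components of the
weighted graph `Γ_a`: each member is an initially odd ear decomposition, every vertex `i`
appears exactly `a i` times (not as an endpoint of subsequent ears), and different members
lie in different connected components of the base graph. -/
def IsInitOddFamily [DecidableEq V] (G : SimpleGraph V) (a : V → ℕ)
    (L : List (List (PreEar V))) : Prop :=
  (∀ D ∈ L, IsInitOddDecomp G D) ∧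
  (∀ i : V, a i = (L.map (earCount i)).sum) ∧
  L.Pairwise (fun D1 D2 =>
    ∀ x y : V, (∃ E ∈ D1, x ∈ E.verts) → (∃ E ∈ D2, y ∈ E.verts) →
      ¬ (baseGraph G a).Reachable x y)

/-- `φ*(Γ_a)`: the minimal total number of even ears in families of initially odd
ear decompositions of the connected components. -/
noncomputable def phiStar [DecidableEq V] (G : SimpleGraph V) (a : V → ℕ) : ℕ :=
  sInf {k : ℕ | ∃ L, IsInitOddFamily G a L ∧ (L.map evenEars).sum = k}

/-- `μ*(Γ) = (φ*(Γ) + n - c) / 2`, where `n` is the number of vertices and `c` the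
number of connected components. -/
noncomputable def muStar [DecidableEq V] (G : SimpleGraph V) : ℕ :=
  (phiStar G (fun _ => 1) + Nat.card V - Nat.card G.ConnectedComponent) / 2

/-- Every connected component of `G` contains an odd cycle (equivalently, an odd
closed walk), i.e. every connected component is non-bipartite. -/
def StronglyNonBip (G : SimpleGraph V) : Prop :=
  ∀ v : V, ∃ u, G.Reachable v u ∧ ∃ p : G.Walk u u, Odd p.length

/-- `G` is non-bipartite: it contains an odd closed walk. -/
def NonBip (G : SimpleGraph V) : Prop :=
  ∃ (u : V) (p : G.Walk u u), Odd p.length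

/-- A vertex cover of `G`. -/
def IsCover (G : SimpleGraph V) (F : Set V) : Prop :=
  ∀ ⦃i j : V⦄, G.Adj i j → i ∈ F ∨ j ∈ F

/-- The closed neighborhood `N[U]`. -/
def closedNbhd (G : SimpleGraph V) (U : Set V) : Set V :=
  {v | v ∈ U ∨ ∃ u ∈ U, G.Adj v u}

/-- The core `c(F) = F \ N[V \ F]` of a cover `F`. -/
def core (G : SimpleGraph V) (F : Set V) : Set V :=
  {i ∈ F | ∀ j, G.Adj i j → j ∈ F}

/-- `U` is a dominating set of `G`: `N[U] = V`. -/
def IsDominating (G : SimpleGraph V) (U : Set V) : Prop :=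
  ∀ v : V, v ∈ U ∨ ∃ u ∈ U, G.Adj v u

/-- The edge ideal of a graph `G` in the polynomial ring over `k`. -/
noncomputable def edgeIdeal (k : Type*) [Field k] (G : SimpleGraph V) :
    Ideal (MvPolynomial V k) :=
  Ideal.span {p | ∃ i j : V, G.Adj i j ∧ p = X i * X j}

/-- The maximal homogeneous ideal `(x_1, ..., x_n)`. -/
noncomputable def maxIdeal (k : Type*) [Field k] (V : Type*) :
    Ideal (MvPolynomial V k) :=
  Ideal.span (Set.range (X : V → MvPolynomial V k))

/-- The monomial `x^a = x_1^{a_1} ⋯ x_n^{a_n}`. -/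
noncomputable def monA (k : Type*) [Field k] [Fintype V] (a : V → ℕ) :
    MvPolynomial V k :=
  ∏ i : V, X i ^ a i

/-- A connected minimal `s`-base: a connected non-bipartite graph with `μ* = s`
containing no proper spanning subgraph which is connected non-bipartite with `μ* = s`. -/
def ConnMinBase [DecidableEq V] (G : SimpleGraph V) (s : ℕ) : Prop :=
  G.Connected ∧ NonBip G ∧ muStar G = s ∧
    ∀ H : SimpleGraph V, H ≤ G → H ≠ G →
      ¬ (H.Connected ∧ NonBip H ∧ muStar H = s)

open Classical in
/-- The restriction of the weight `a` to the connected component of `i`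
in the base graph of `Γ_a`. -/
noncomputable def compWeight [DecidableEq V] (G : SimpleGraph V) (a : V → ℕ) (i : V) :
    V → ℕ :=
  fun j => if (baseGraph G a).Reachable i j then a j else 0

end Defs
section AuxStmt3

open Pointwise

variable {k : Type*} [Field k] {n : ℕ}

/-- Exponent vectors of edge monomials. -/
def edgeExp (G : SimpleGraph (Fin n)) : Set (Fin n →₀ ℕ) :=
  {d | ∃ i j, G.Adj i j ∧ d = Finsupp.single i 1 + Finsupp.single j 1}

/-- t-fold sumsets of edge exponent vectors. -/
def edgeExpPow (G : SimpleGraph (Fin n)) : ℕ → Set (Fin n →₀ ℕ)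
  | 0 => {0}
  | t + 1 => edgeExpPow G t + edgeExp G

lemma edgeExpPow_succ (G : SimpleGraph (Fin n)) (t : ℕ) :
    edgeExpPow G (t + 1) = edgeExpPow G t + edgeExp G := rfl

lemma X_mul_X (i j : Fin n) :
    (X i : MvPolynomial (Fin n) k) * X j
      = monomial (Finsupp.single i 1 + Finsupp.single j 1) 1 := by
  rw [X, X, monomial_mul, one_mul]

lemma edgeIdeal_eq_span (G : SimpleGraph (Fin n)) :
    edgeIdeal k G = Ideal.span ((fun s => monomial s (1 : k)) '' edgeExp G) := by
  unfold edgeIdeal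
  congr 1
  ext p
  constructor
  · rintro ⟨i, j, hij, rfl⟩
    exact ⟨_, ⟨i, j, hij, rfl⟩, (X_mul_X i j).symm⟩
  · rintro ⟨d, ⟨i, j, hij, rfl⟩, rfl⟩
    exact ⟨i, j, hij, (X_mul_X i j).symm⟩

lemma edgeIdeal_pow_eq_span (G : SimpleGraph (Fin n)) (t : ℕ) :
    (edgeIdeal k G) ^ t
      = Ideal.span ((fun s => monomial s (1 : k)) '' edgeExpPow G t) := by
  induction t with
  | zero =>
    simp only [pow_zero, edgeExpPow, Set.image_singleton, monomial_zero', C_1,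
      Ideal.one_eq_top, Ideal.span_singleton_one]
  | succ t ih =>
    rw [pow_succ, ih, edgeIdeal_eq_span, Ideal.span_mul_span', edgeExpPow_succ]
    congr 1
    ext p
    constructor
    · rintro ⟨_, ⟨x, hx, rfl⟩, _, ⟨y, hy, rfl⟩, rfl⟩
      exact ⟨x + y, Set.add_mem_add hx hy, by simp [monomial_mul]⟩
    · rintro ⟨z, hz, rfl⟩
      rcases Set.mem_add.mp hz with ⟨x, hx, y, hy, rfl⟩
      exact ⟨_, ⟨x, hx, rfl⟩, _, ⟨y, hy, rfl⟩, by simp [monomial_mul]⟩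

lemma monomial_mem_span_iff (S : Set (Fin n →₀ ℕ)) (c : Fin n →₀ ℕ) :
    monomial c (1 : k) ∈ Ideal.span ((fun s => monomial s (1 : k)) '' S)
      ↔ ∃ s ∈ S, s ≤ c := by
  classical
  rw [mem_ideal_span_monomial_image]
  constructor
  · intro h
    exact h c (by simp [support_monomial])
  · rintro ⟨s, hs, hle⟩ xi hxi
    rw [support_monomial, if_neg one_ne_zero, Finset.mem_singleton] at hxi
    exact ⟨s, hs, hxi ▸ hle⟩

lemma exists_adj_of_mem_edgeExpPow (G : SimpleGraph (Fin n)) (t : ℕ)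
    (s : Fin n →₀ ℕ) (hs : s ∈ edgeExpPow G t) (v : Fin n) (hv : s v ≠ 0) :
    ∃ j, G.Adj v j ∧ 1 ≤ s j := by
  induction t generalizing s with
  | zero =>
    simp only [edgeExpPow, Set.mem_singleton_iff] at hs
    subst hs; simp at hv
  | succ t ih =>
    rw [edgeExpPow_succ] at hs
    rcases Set.mem_add.mp hs with ⟨x, hx, y, ⟨i, j, hij, rfl⟩, hxy⟩
    have happ : ∀ w, s w = x w + ((Finsupp.single i 1) w + (Finsupp.single j 1) w) := by
      intro w
      rw [← hxy]
      simp [Finsupp.add_apply]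
    by_cases hxv : x v = 0
    · have hne : (Finsupp.single i 1) v + (Finsupp.single j 1) v ≠ 0 := by
        intro h; apply hv; rw [happ v, hxv, h]
      have hvij : v = i ∨ v = j := by
        by_contra hc
        push_neg at hc
        simp [Finsupp.single_apply, Ne.symm hc.1, Ne.symm hc.2] at hne
      rcases hvij with rfl | rfl
      · exact ⟨j, hij, by rw [happ j, Finsupp.single_eq_same]; omega⟩
      · exact ⟨i, hij.symm, by rw [happ i, Finsupp.single_eq_same]; omega⟩
    · obtain ⟨j', hadj, hj'⟩ := ih x hx hxv
      exact ⟨j', hadj, by rw [happ j']; omega⟩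

lemma monA_eq_monomial [Fintype (Fin n)] (a : Fin n → ℕ) :
    monA k a = monomial (Finsupp.equivFunOnFinite.symm a) (1 : k) := by
  set d : Fin n →₀ ℕ := Finsupp.equivFunOnFinite.symm a with hd
  calc monA k a = ∏ i : Fin n, X i ^ d i := rfl
  _ = ∏ i ∈ d.support, X i ^ d i :=
      (Finset.prod_subset (Finset.subset_univ _) (fun i _ hi => by
        rw [Finsupp.notMem_support_iff.mp hi, pow_zero])).symm
  _ = monomial d 1 := prod_X_pow_eq_monomial

end AuxStmt3

/-- if `x^a ∈ (I^t : m) \ I^t` with `t ≥ 2`, then the support of `a`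
is a dominating set of `Γ` and `Γ_a` has no isolated vertices. -/
theorem stmt_3 {k : Type*} [Field k] {n : ℕ} (G : SimpleGraph (Fin n))
    (a : Fin n → ℕ) (t : ℕ) (ht : 2 ≤ t)
    (h1 : monA k a ∈ Submodule.colon ((edgeIdeal k G) ^ t) (maxIdeal k (Fin n)))
    (h2 : monA k a ∉ (edgeIdeal k G) ^ t) :
    IsDominating G {i | a i ≠ 0} ∧ ∀ i, a i ≠ 0 → ∃ j, a j ≠ 0 ∧ G.Adj i j := by
  set d : Fin n →₀ ℕ := Finsupp.equivFunOnFinite.symm a with hd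
  have hda : ∀ i, d i = a i := fun i => rfl
  have hmonA : monA k a = monomial d (1 : k) := monA_eq_monomial a
  have key : ∀ v : Fin n, ∃ j, G.Adj v j ∧ a j ≠ 0 := by
    intro v
    have hXv : (X v : MvPolynomial (Fin n) k) ∈ maxIdeal k (Fin n) :=
      Ideal.subset_span ⟨v, rfl⟩
    have hmem : (X v : MvPolynomial (Fin n) k) * monA k a ∈ (edgeIdeal k G) ^ t := by
      have := Submodule.mem_colon.mp h1 (X v) hXv
      rwa [smul_eq_mul, mul_comm] at this
    rw [hmonA, X, monomial_mul, one_mul, edgeIdeal_pow_eq_span,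
      monomial_mem_span_iff] at hmem
    obtain ⟨s, hsT, hsle⟩ := hmem
    have hsle' : ∀ i, s i ≤ ((Finsupp.single v 1 + d : Fin n →₀ ℕ) : Fin n → ℕ) i :=
      fun i => Finsupp.le_def.mp hsle i
    by_cases hsv : s v = 0
    · exfalso
      apply h2
      rw [hmonA, edgeIdeal_pow_eq_span, monomial_mem_span_iff]
      refine ⟨s, hsT, fun i => ?_⟩
      by_cases hiv : i = v
      · subst hiv; simp [hsv]
      · have := hsle' i
        simpa [Finsupp.add_apply, Finsupp.single_apply, Ne.symm hiv] using this
    · obtain ⟨j, hadj, hj⟩ := exists_adj_of_mem_edgeExpPow G t s hsT v hsv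
      have hjv : j ≠ v := fun h => G.irrefl (v := v) (h ▸ hadj)
      have h1j : 1 ≤ ((Finsupp.single v 1 + d : Fin n →₀ ℕ) : Fin n → ℕ) j :=
        le_trans hj (hsle' j)
      rw [Finsupp.add_apply, Finsupp.single_apply, if_neg (Ne.symm hjv),
        zero_add] at h1j
      exact ⟨j, hadj, by have := hda j; omega⟩
  constructor
  · intro v
    obtain ⟨j, hadj, hj⟩ := key v
    exact Or.inr ⟨j, hj, hadj⟩
  · intro i _
    obtain ⟨j, hadj, hj⟩ := key i
    exact ⟨j, hj, hadj⟩
end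

section
/- A vertex-weighted graph Γ_a is matching-critical (i.e., ν(Γ_{a−e_i}) = ν(Γ_a) for all i in the support of a) if and only if its polarization p(Γ_a) is a matching-critical graph (i.e., ν(p(Γ_a) − v) = ν(p(Γ_a)) for every vertex v). -/
open MvPolynomial

section Proof5

variable {V : Type*} [DecidableEq V]

lemma count_map_sigma_fst {a : V → ℕ} (N : Multiset (Σ i : V, Fin (a i))) (i : V) :
    (N.map Sigma.fst).count i = ∑ k : Fin (a i), N.count ⟨i, k⟩ := by
  induction N using Multiset.induction_on with
  | empty => simp
  | cons x N ih =>
    obtain ⟨j, kj⟩ := x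
    simp only [Multiset.map_cons, Multiset.count_cons, ih, Finset.sum_add_distrib]
    congr 1
    by_cases h : i = j
    · subst h
      simp
    · simp [h, Ne.symm h, fun k : Fin (_ : ℕ) => (show (⟨i,k⟩ : Σ i : V, Fin _) ≠ ⟨j,kj⟩ from fun he => h (congrArg Sigma.fst he))]

lemma lift_list (G : SimpleGraph V) (a : V → ℕ) (L : List (V × V)) :
    ∀ b : V → ℕ, (∀ i, b i ≤ a i) →
      (∀ e ∈ L, G.Adj e.1 e.2) →
      (∀ i, (L.map Prod.fst).count i + (L.map Prod.snd).count i ≤ b i) →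
      ∃ L' : List ((Σ i : V, Fin (a i)) × (Σ i : V, Fin (a i))),
        L'.map (Prod.map Sigma.fst Sigma.fst) = L ∧
        ∀ x : Σ i : V, Fin (a i),
          (L'.map Prod.fst).count x + (L'.map Prod.snd).count x
            ≤ if x.2.val < a x.1 - b x.1 then 0 else 1 := by
  induction L with
  | nil =>
    intro b _ _ _
    exact ⟨[], by simp, fun x => by simp⟩
  | cons e rest ih =>
    intro b hba hadj hcnt
    obtain ⟨p, q⟩ := e
    have hpq : p ≠ q := (hadj (p, q) List.mem_cons_self).ne
    have hbp : 1 ≤ b p := by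
      have h := hcnt p
      simp [List.count_cons] at h
      omega
    have hbq : 1 ≤ b q := by
      have h := hcnt q
      simp [List.count_cons, Ne.symm hpq] at h
      omega
    set b' : V → ℕ :=
      fun i => b i - ((if i = p then 1 else 0) + (if i = q then 1 else 0)) with hb'
    have hb'a : ∀ i, b' i ≤ a i := fun i => le_trans (Nat.sub_le _ _) (hba i)
    have hadj' : ∀ e ∈ rest, G.Adj e.1 e.2 := fun e he => hadj e (List.mem_cons_of_mem _ he)
    have hcnt' : ∀ i, (rest.map Prod.fst).count i + (rest.map Prod.snd).count i ≤ b' i := by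
      intro i
      have h := hcnt i
      simp only [List.map_cons, List.count_cons] at h
      by_cases h1 : i = p <;> by_cases h2 : i = q <;> simp [hb', h1, h2, hpq, Ne.symm hpq] at h ⊢ <;> omega
    obtain ⟨L', hmap, hcount⟩ := ih b' hb'a hadj' hcnt'
    have hap : b p ≤ a p := hba p
    have haq : b q ≤ a q := hba q
    refine ⟨(⟨p, ⟨a p - b p, by omega⟩⟩, ⟨q, ⟨a q - b q, by omega⟩⟩) :: L', by simp [hmap], ?_⟩
    intro x
    obtain ⟨x1, x2⟩ := x
    have hx := hcount ⟨x1, x2⟩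
    dsimp only at hx
    have hb'p : b' p = b p - 1 := by simp [hb', hpq]
    have hb'q : b' q = b q - 1 := by simp [hb', Ne.symm hpq]
    simp only [List.map_cons, List.count_cons]
    by_cases h1 : x1 = p
    · subst h1
      rw [hb'p] at hx
      simp only [beq_iff_eq, Sigma.mk.inj_iff, heq_eq_eq, true_and, hpq, Ne.symm hpq,
        false_and, and_false, if_false, Fin.ext_iff]
      split_ifs at hx ⊢ <;> omega
    · by_cases h2 : x1 = q
      · subst h2
        rw [hb'q] at hx
        simp only [beq_iff_eq, Sigma.mk.inj_iff, heq_eq_eq, true_and, h1, Ne.symm h1,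
          false_and, and_false, if_false, Fin.ext_iff]
        split_ifs at hx ⊢ <;> omega
      · have hbb : b' x1 = b x1 := by simp [hb', h1, h2]
        rw [hbb] at hx
        simp only [beq_iff_eq, Sigma.mk.inj_iff, h1, h2, Ne.symm h1, Ne.symm h2,
          false_and, and_false, if_false]
        omega

lemma sum_if_lt (n m : ℕ) : ∑ k : Fin n, (if (k : ℕ) < m then 0 else 1) = n - m := by
  rw [Fin.sum_univ_eq_sum_range (fun j => if j < m then 0 else 1)]
  induction n with
  | zero => simp
  | succ n ih =>
    rw [Finset.sum_range_succ, ih]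
    by_cases h : n < m <;> simp [h] <;> omega

lemma pol_set_eq (G : SimpleGraph V) (a b : V → ℕ) (hba : ∀ i, b i ≤ a i)
    (w : (Σ i : V, Fin (a i)) → ℕ)
    (hw : ∀ x : Σ i : V, Fin (a i), w x = if (x.2 : ℕ) < a x.1 - b x.1 then 0 else 1) :
    {k : ℕ | ∃ M : Multiset (V × V), IsWMatching G b M ∧ Multiset.card M = k} =
      {k : ℕ | ∃ M : Multiset ((Σ i : V, Fin (a i)) × (Σ i : V, Fin (a i))),
        IsWMatching (polarization G a) w M ∧ Multiset.card M = k} := by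
  have key : ∀ (α β : Type _) [DecidableEq β] (N : Multiset α) (f : α → β) (i : β),
      (N.toList.map f).count i = (N.map f).count i := by
    intro α β _ N f i
    rw [← Multiset.coe_count, ← Multiset.map_coe, Multiset.coe_toList]
  ext n
  constructor
  · rintro ⟨M, ⟨hadj, hcnt⟩, rfl⟩
    obtain ⟨L', hmap, hcount⟩ := lift_list G a M.toList b hba
      (fun e he => hadj e (Multiset.mem_toList.mp he))
      (fun i => by rw [key, key]; exact hcnt i)
    refine ⟨(L' : Multiset _), ⟨?_, ?_⟩, ?_⟩
    · intro e he
      have h1 : (Prod.map Sigma.fst Sigma.fst e) ∈ M.toList := by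
        rw [← hmap]; exact List.mem_map_of_mem he
      exact hadj _ (Multiset.mem_toList.mp h1)
    · intro x
      have h1 := hcount x
      rw [hw x]
      simpa using h1
    · have : L'.length = M.toList.length := by
        rw [← List.length_map (Prod.map Sigma.fst Sigma.fst), hmap]
      simpa [this] using (Multiset.length_toList M)
  · rintro ⟨M, ⟨hadj, hcnt⟩, rfl⟩
    refine ⟨M.map (Prod.map Sigma.fst Sigma.fst), ⟨?_, ?_⟩, by simp⟩
    · intro e he
      obtain ⟨e', he', rfl⟩ := Multiset.mem_map.mp he
      exact hadj e' he'
    · intro i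
      have e1 : (M.map (Prod.map Sigma.fst Sigma.fst)).map Prod.fst
          = (M.map Prod.fst).map Sigma.fst := by
        rw [Multiset.map_map, Multiset.map_map]; rfl
      have e2 : (M.map (Prod.map Sigma.fst Sigma.fst)).map Prod.snd
          = (M.map Prod.snd).map Sigma.fst := by
        rw [Multiset.map_map, Multiset.map_map]; rfl
      rw [e1, e2, count_map_sigma_fst, count_map_sigma_fst, ← Finset.sum_add_distrib]
      calc ∑ k : Fin (a i), ((M.map Prod.fst).count ⟨i, k⟩ + (M.map Prod.snd).count ⟨i, k⟩)
          ≤ ∑ k : Fin (a i), w ⟨i, k⟩ :=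
            Finset.sum_le_sum fun k _ => hcnt ⟨i, k⟩
        _ = ∑ k : Fin (a i), (if (k : ℕ) < a i - b i then 0 else 1) := by
            refine Finset.sum_congr rfl fun k _ => ?_
            exact hw ⟨i, k⟩
        _ = a i - (a i - b i) := sum_if_lt _ _
        _ = b i := by have := hba i; omega

lemma pol_map_matching (G : SimpleGraph V) (a : V → ℕ)
    (σ : (Σ i : V, Fin (a i)) ≃ (Σ i : V, Fin (a i))) (hσ : ∀ x, (σ x).1 = x.1)
    (w : (Σ i : V, Fin (a i)) → ℕ) (M : Multiset _)
    (h : IsWMatching (polarization G a) w M) :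
    IsWMatching (polarization G a) (w ∘ σ.symm) (M.map (Prod.map σ σ)) := by
  obtain ⟨hadj, hcnt⟩ := h
  constructor
  · intro e he
    obtain ⟨e', he', rfl⟩ := Multiset.mem_map.mp he
    have := hadj e' he'
    show (polarization G a).Adj (σ e'.1) (σ e'.2)
    show G.Adj (σ e'.1).1 (σ e'.2).1
    rw [hσ, hσ]
    exact this
  · intro x
    have e1 : (M.map (Prod.map σ σ)).map Prod.fst = (M.map Prod.fst).map σ := by
      rw [Multiset.map_map, Multiset.map_map]; rfl
    have e2 : (M.map (Prod.map σ σ)).map Prod.snd = (M.map Prod.snd).map σ := by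
      rw [Multiset.map_map, Multiset.map_map]; rfl
    rw [e1, e2]
    have hx : x = σ (σ.symm x) := (σ.apply_symm_apply x).symm
    rw [hx, Multiset.count_map_eq_count' _ _ σ.injective,
      Multiset.count_map_eq_count' _ _ σ.injective]
    simpa using hcnt (σ.symm x)

lemma wNu_relabel (G : SimpleGraph V) (a : V → ℕ)
    (σ : (Σ i : V, Fin (a i)) ≃ (Σ i : V, Fin (a i))) (hσ : ∀ x, (σ x).1 = x.1)
    (w : (Σ i : V, Fin (a i)) → ℕ) :
    wNu (polarization G a) (w ∘ σ) = wNu (polarization G a) w := by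
  have hσ' : ∀ x, (σ.symm x).1 = x.1 := by
    intro x
    conv_rhs => rw [← σ.apply_symm_apply x]
    exact (hσ _).symm
  unfold wNu
  congr 1
  ext n
  constructor
  · rintro ⟨M, hM, rfl⟩
    refine ⟨M.map (Prod.map σ σ), ?_, by simp⟩
    have h2 := pol_map_matching G a σ hσ (w ∘ σ) M hM
    have hf : (w ∘ ⇑σ) ∘ ⇑σ.symm = w := by funext x; simp
    rwa [hf] at h2
  · rintro ⟨M, hM, rfl⟩
    refine ⟨M.map (Prod.map σ.symm σ.symm), ?_, by simp⟩
    have h2 := pol_map_matching G a σ.symm hσ' w M hM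
    have hf : w ∘ ⇑σ.symm.symm = w ∘ ⇑σ := by funext x; simp
    rwa [hf] at h2

lemma wNu_pol (G : SimpleGraph V) (a : V → ℕ) :
    wNu (polarization G a) (fun _ => 1) = wNu G a := by
  unfold wNu
  congr 1
  refine (pol_set_eq G a a (fun i => le_refl _) _ ?_).symm
  intro x
  simp

lemma wNu_pol_del0 (G : SimpleGraph V) (a : V → ℕ) (i₀ : V) (h : a i₀ ≠ 0) :
    wNu (polarization G a)
        ((fun _ => 1) - Pi.single ⟨i₀, ⟨0, Nat.pos_of_ne_zero h⟩⟩ 1) =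
      wNu G (a - Pi.single i₀ 1) := by
  unfold wNu
  congr 1
  refine (pol_set_eq G a (a - Pi.single i₀ 1) (fun i => Nat.sub_le _ _) _ ?_).symm
  intro x
  obtain ⟨x1, x2⟩ := x
  simp only [Pi.sub_apply, Pi.single_apply, Pi.one_apply]
  by_cases h1 : x1 = i₀
  · subst h1
    simp only [if_pos rfl]
    have hx : a x1 - (a x1 - 1) = 1 := by
      have := Nat.pos_of_ne_zero h
      omega
    simp only [if_true]
    rw [hx]
    by_cases h2 : (x2 : ℕ) = 0
    · have : (⟨x1, x2⟩ : Σ i : V, Fin (a i)) = ⟨x1, ⟨0, Nat.pos_of_ne_zero h⟩⟩ := by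
        simp [Sigma.mk.inj_iff, Fin.ext_iff, h2]
      simp [this, h2]
    · have : (⟨x1, x2⟩ : Σ i : V, Fin (a i)) ≠ ⟨x1, ⟨0, Nat.pos_of_ne_zero h⟩⟩ := by
        simp [Sigma.mk.inj_iff, Fin.ext_iff, h2]
      simp [this, h2]
  · have hne : (⟨x1, x2⟩ : Σ i : V, Fin (a i)) ≠ ⟨i₀, ⟨0, Nat.pos_of_ne_zero h⟩⟩ :=
      fun he => h1 (congrArg Sigma.fst he)
    simp [hne, h1]

lemma wNu_pol_del (G : SimpleGraph V) (a : V → ℕ) (i₀ : V) (k₀ : Fin (a i₀)) :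
    wNu (polarization G a) ((fun _ => 1) - Pi.single ⟨i₀, k₀⟩ 1) =
      wNu G (a - Pi.single i₀ 1) := by
  have h : a i₀ ≠ 0 := k₀.pos.ne'
  set z0 : Σ i : V, Fin (a i) := ⟨i₀, ⟨0, Nat.pos_of_ne_zero h⟩⟩ with hz0
  set zk : Σ i : V, Fin (a i) := ⟨i₀, k₀⟩ with hzk
  set σ := Equiv.swap z0 zk with hσdef
  have hσ : ∀ x, (σ x).1 = x.1 := by
    intro x
    rw [hσdef, Equiv.swap_apply_def]
    split_ifs with e1 e2
    · rw [e1]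
    · rw [e2]
    · rfl
  have hfun : ((fun _ => 1) - Pi.single z0 1) ∘ ⇑σ =
      ((fun _ => 1) - Pi.single zk 1 : (Σ i : V, Fin (a i)) → ℕ) := by
    funext x
    simp only [Function.comp_apply, Pi.sub_apply, Pi.single_apply, Pi.one_apply]
    have : (σ x = z0) ↔ (x = zk) := by
      rw [hσdef, Equiv.swap_apply_eq_iff, Equiv.swap_apply_left]
    simp [this]
  calc wNu (polarization G a) ((fun _ => 1) - Pi.single zk 1)
      = wNu (polarization G a) (((fun _ => 1) - Pi.single z0 1) ∘ ⇑σ) := by rw [hfun]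
    _ = wNu (polarization G a) ((fun _ => 1) - Pi.single z0 1) := wNu_relabel G a σ hσ _
    _ = wNu G (a - Pi.single i₀ 1) := wNu_pol_del0 G a i₀ h

end Proof5
/-- `Γ_a` is matching-critical iff its polarization is a
matching-critical graph. -/
theorem stmt_5 {V : Type*} [DecidableEq V] (G : SimpleGraph V) (a : V → ℕ) :
    MatchingCritical G a ↔
      MatchingCritical (polarization G a) (fun _ => 1) := by
  constructor
  · intro hcrit x _
    obtain ⟨i, k⟩ := x
    rw [wNu_pol_del G a i k, wNu_pol G a]
    exact hcrit i k.pos.ne'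
  · intro hcrit i hai
    have k : Fin (a i) := ⟨0, Nat.pos_of_ne_zero hai⟩
    have h := hcrit ⟨i, k⟩ one_ne_zero
    rwa [wNu_pol_del G a i k, wNu_pol G a] at h
end
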